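/- arXiv:math/9903073 — 2 statements merged into one kernel-verified Lean document; each statement's English description precedes it below -/
import Mathlib

section
/- For nonnegative integers i, j and 1 ≤ a ≤ b, ∫ₐᵇ t^{-γ} Q_i(t) Q_j(t) dt ≤ ∫ₐᵇ t^{-γ} h(t) Q_{i+j}(t) dt, where Q_m(t) = ∫₁^∞ s^{-γ}(max(t,s))^{-1} h(s)^m ds and h = Q₀. -/
open MeasureTheory Real

noncomputable def h0 (γ t : ℝ) : ℝ := ∫ s in (1:ℝ)..t, s ^ (-γ)

noncomputable def hfun (γ t : ℝ) : ℝ := ∫ s in Set.Ioi (1:ℝ), s ^ (-γ) * (max t s)⁻¹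

noncomputable def Nfun (γ : ℝ) (m : ℕ) (t : ℝ) : ℝ := ∫ s in (1:ℝ)..t, s ^ (-γ) * (hfun γ s) ^ m

noncomputable def Qfun (γ : ℝ) (m : ℕ) (t : ℝ) : ℝ :=
  ∫ s in Set.Ioi (1:ℝ), s ^ (-γ) * (max t s)⁻¹ * (hfun γ s) ^ m

noncomputable def Pfun (γ : ℝ) (m : ℕ) (t : ℝ) : ℝ :=
  ∫ s in Set.Ioi (1:ℝ), s ^ (-γ) * hfun γ (max t s) * (hfun γ s) ^ m

noncomputable def Rfun (γ : ℝ) (m : ℕ) (t : ℝ) : ℝ :=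
  ∫ s in Set.Ioi t, s ^ (-2 : ℝ) * Pfun γ m s

lemma aux_base_int {γ : ℝ} (hγ : 0 < γ) (t : ℝ) :
    IntegrableOn (fun s : ℝ => s ^ (-γ) * (max t s)⁻¹) (Set.Ioi 1) := by
  have hmeas : Measurable fun s : ℝ => s ^ (-γ) * (max t s)⁻¹ := by fun_prop
  refine Integrable.mono' (g := fun s : ℝ => s ^ (-γ - 1))
    (integrableOn_Ioi_rpow_of_lt (by linarith) one_pos) hmeas.aestronglyMeasurable ?_
  filter_upwards [self_mem_ae_restrict (measurableSet_Ioi)] with s hs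
  have hs1 : (1:ℝ) < s := hs
  have hs0 : (0:ℝ) < s := by linarith
  have h1 : (max t s)⁻¹ ≤ s⁻¹ := inv_anti₀ hs0 (le_max_right _ _)
  have h2 : s ^ (-γ) * (max t s)⁻¹ ≤ s ^ (-γ) * s⁻¹ :=
    mul_le_mul_of_nonneg_left h1 (rpow_nonneg hs0.le _)
  rw [Real.norm_eq_abs, abs_of_nonneg (by positivity)]
  calc s ^ (-γ) * (max t s)⁻¹ ≤ s ^ (-γ) * s⁻¹ := h2
    _ = s ^ (-γ - 1) := by
      rw [← Real.rpow_neg_one s, ← Real.rpow_add hs0]; ring_nf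

lemma hfun_nonneg (γ t : ℝ) : 0 ≤ hfun γ t := by
  apply setIntegral_nonneg measurableSet_Ioi
  intro s hs
  have hs0 : (0:ℝ) < s := lt_trans one_pos hs
  have : (0:ℝ) < max t s := lt_of_lt_of_le hs0 (le_max_right _ _)
  positivity

lemma hfun_anti {γ : ℝ} (hγ : 0 < γ) : Antitone (hfun γ) := by
  intro t₁ t₂ h
  apply setIntegral_mono_on (aux_base_int hγ t₂) (aux_base_int hγ t₁) measurableSet_Ioi
  intro s hs
  have hs0 : (0:ℝ) < s := lt_trans one_pos hs
  have h1 : (0:ℝ) < max t₁ s := lt_of_lt_of_le hs0 (le_max_right _ _)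
  have h2 : max t₁ s ≤ max t₂ s := max_le_max h le_rfl
  have h3 : (0:ℝ) ≤ s ^ (-γ) := Real.rpow_nonneg hs0.le _
  gcongr

lemma hfun_meas {γ : ℝ} (hγ : 0 < γ) : Measurable (hfun γ) := (hfun_anti hγ).measurable

lemma intK {γ : ℝ} (hγ : 0 < γ) (m : ℕ) (t : ℝ) :
    IntegrableOn (fun s : ℝ => s ^ (-γ) * (max t s)⁻¹ * (hfun γ s) ^ m) (Set.Ioi 1) := by
  have hmeas : Measurable fun s : ℝ => s ^ (-γ) * (max t s)⁻¹ * (hfun γ s) ^ m :=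
    ((by fun_prop : Measurable fun s : ℝ => s ^ (-γ) * (max t s)⁻¹)).mul
      ((hfun_meas hγ).pow_const m)
  refine Integrable.mono' (g := fun s : ℝ => (hfun γ 1) ^ m * (s ^ (-γ) * (max t s)⁻¹))
    ((aux_base_int hγ t).const_mul _) hmeas.aestronglyMeasurable ?_
  filter_upwards [self_mem_ae_restrict (measurableSet_Ioi)] with s hs
  have hs1 : (1:ℝ) < s := hs
  have hs0 : (0:ℝ) < s := by linarith
  have hm0 : (0:ℝ) < max t s := lt_of_lt_of_le hs0 (le_max_right _ _)
  have hsn : 0 ≤ hfun γ s := hfun_nonneg γ s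
  have hb : (hfun γ s) ^ m ≤ (hfun γ 1) ^ m :=
    pow_le_pow_left₀ hsn ((hfun_anti hγ) hs1.le) m
  rw [Real.norm_eq_abs, abs_of_nonneg (by positivity)]
  calc s ^ (-γ) * (max t s)⁻¹ * (hfun γ s) ^ m
      ≤ s ^ (-γ) * (max t s)⁻¹ * (hfun γ 1) ^ m := by
        apply mul_le_mul_of_nonneg_left hb (by positivity)
    _ = (hfun γ 1) ^ m * (s ^ (-γ) * (max t s)⁻¹) := by ring

lemma Qfun_nonneg (γ : ℝ) (m : ℕ) (t : ℝ) : 0 ≤ Qfun γ m t := by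
  apply setIntegral_nonneg measurableSet_Ioi
  intro s hs
  have hs0 : (0:ℝ) < s := lt_trans one_pos hs
  have h1 : (0:ℝ) < max t s := lt_of_lt_of_le hs0 (le_max_right _ _)
  have := hfun_nonneg γ s
  positivity

lemma Qfun_anti {γ : ℝ} (hγ : 0 < γ) (m : ℕ) : Antitone (Qfun γ m) := by
  intro t₁ t₂ h
  apply setIntegral_mono_on (intK hγ m t₂) (intK hγ m t₁) measurableSet_Ioi
  intro s hs
  have hs0 : (0:ℝ) < s := lt_trans one_pos hs
  have h1 : (0:ℝ) < max t₁ s := lt_of_lt_of_le hs0 (le_max_right _ _)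
  have h2 : max t₁ s ≤ max t₂ s := max_le_max h le_rfl
  have h3 : (0:ℝ) ≤ s ^ (-γ) := Real.rpow_nonneg hs0.le _
  have h4 := hfun_nonneg γ s
  gcongr

lemma Qfun_zero (γ t : ℝ) : Qfun γ 0 t = hfun γ t := by
  unfold Qfun hfun; simp

lemma inner_nonneg {γ : ℝ} (hγ : 0 < γ) (i j : ℕ) (t u : ℝ) :
    0 ≤ Qfun γ (i + j) t - (hfun γ u) ^ j * Qfun γ i t - (hfun γ u) ^ i * Qfun γ j t
        + (hfun γ u) ^ (i + j) * hfun γ t := by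
  have hu : 0 ≤ hfun γ u := hfun_nonneg γ u
  have key : Qfun γ (i + j) t - (hfun γ u) ^ j * Qfun γ i t - (hfun γ u) ^ i * Qfun γ j t
        + (hfun γ u) ^ (i + j) * hfun γ t
      = ∫ s in Set.Ioi (1:ℝ), (s ^ (-γ) * (max t s)⁻¹) *
          (((hfun γ s) ^ i - (hfun γ u) ^ i) * ((hfun γ s) ^ j - (hfun γ u) ^ j)) := by
    have h1 := intK hγ (i + j) t
    have h2 := (intK hγ i t).const_mul ((hfun γ u) ^ j)
    have h3 := (intK hγ j t).const_mul ((hfun γ u) ^ i)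
    have h4 := (intK hγ 0 t).const_mul ((hfun γ u) ^ (i + j))
    have expand : ∀ s : ℝ, (s ^ (-γ) * (max t s)⁻¹) *
          (((hfun γ s) ^ i - (hfun γ u) ^ i) * ((hfun γ s) ^ j - (hfun γ u) ^ j))
        = (s ^ (-γ) * (max t s)⁻¹ * (hfun γ s) ^ (i + j)
            - (hfun γ u) ^ j * (s ^ (-γ) * (max t s)⁻¹ * (hfun γ s) ^ i))
          - (hfun γ u) ^ i * (s ^ (-γ) * (max t s)⁻¹ * (hfun γ s) ^ j)
          + (hfun γ u) ^ (i + j) * (s ^ (-γ) * (max t s)⁻¹ * (hfun γ s) ^ 0) := by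
      intro s; rw [pow_add, pow_add]; ring
    have h12 : IntegrableOn (fun s : ℝ => s ^ (-γ) * (max t s)⁻¹ * (hfun γ s) ^ (i + j)
        - (hfun γ u) ^ j * (s ^ (-γ) * (max t s)⁻¹ * (hfun γ s) ^ i)) (Set.Ioi 1) := h1.sub h2
    have h123 : IntegrableOn (fun s : ℝ => (s ^ (-γ) * (max t s)⁻¹ * (hfun γ s) ^ (i + j)
        - (hfun γ u) ^ j * (s ^ (-γ) * (max t s)⁻¹ * (hfun γ s) ^ i))
        - (hfun γ u) ^ i * (s ^ (-γ) * (max t s)⁻¹ * (hfun γ s) ^ j)) (Set.Ioi 1) := h12.sub h3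
    rw [MeasureTheory.integral_congr_ae (Filter.Eventually.of_forall expand)]
    rw [integral_add h123 h4, integral_sub h12 h3,
      integral_sub h1 h2, integral_const_mul, integral_const_mul, integral_const_mul]
    have e0 : (∫ s in Set.Ioi (1:ℝ), s ^ (-γ) * (max t s)⁻¹ * (hfun γ s) ^ 0) = hfun γ t := by
      rw [← Qfun_zero γ t]; rfl
    have eij : (∫ s in Set.Ioi (1:ℝ), s ^ (-γ) * (max t s)⁻¹ * (hfun γ s) ^ (i + j))
        = Qfun γ (i + j) t := rfl
    have ei : (∫ s in Set.Ioi (1:ℝ), s ^ (-γ) * (max t s)⁻¹ * (hfun γ s) ^ i)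
        = Qfun γ i t := rfl
    have ej : (∫ s in Set.Ioi (1:ℝ), s ^ (-γ) * (max t s)⁻¹ * (hfun γ s) ^ j)
        = Qfun γ j t := rfl
    rw [e0, eij, ei, ej]
  rw [key]
  apply setIntegral_nonneg measurableSet_Ioi
  intro s hs
  have hs0 : (0:ℝ) < s := lt_trans one_pos hs
  have h1 : (0:ℝ) < max t s := lt_of_lt_of_le hs0 (le_max_right _ _)
  have hsn : 0 ≤ hfun γ s := hfun_nonneg γ s
  have hfac : 0 ≤ ((hfun γ s) ^ i - (hfun γ u) ^ i) * ((hfun γ s) ^ j - (hfun γ u) ^ j) := by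
    rcases le_total (hfun γ s) (hfun γ u) with h | h
    · nlinarith [pow_le_pow_left₀ hsn h i, pow_le_pow_left₀ hsn h j]
    · nlinarith [pow_le_pow_left₀ hu h i, pow_le_pow_left₀ hu h j]
  positivity

lemma key_ineq {γ : ℝ} (hγ : 0 < γ) (i j : ℕ) (t : ℝ) :
    Qfun γ i t * Qfun γ j t ≤ hfun γ t * Qfun γ (i + j) t := by
  have h1 := intK hγ (i + j) t
  have hi := intK hγ i t
  have hj := intK hγ j t
  have h0 := intK hγ 0 t
  have main : 0 ≤ ∫ u in Set.Ioi (1:ℝ), (u ^ (-γ) * (max t u)⁻¹) *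
      (Qfun γ (i + j) t - (hfun γ u) ^ j * Qfun γ i t - (hfun γ u) ^ i * Qfun γ j t
        + (hfun γ u) ^ (i + j) * hfun γ t) := by
    apply setIntegral_nonneg measurableSet_Ioi
    intro u hu
    have hu0 : (0:ℝ) < u := lt_trans one_pos hu
    have hm1 : (0:ℝ) < max t u := lt_of_lt_of_le hu0 (le_max_right _ _)
    have := inner_nonneg hγ i j t u
    positivity
  have expand : ∀ u : ℝ, (u ^ (-γ) * (max t u)⁻¹) *
      (Qfun γ (i + j) t - (hfun γ u) ^ j * Qfun γ i t - (hfun γ u) ^ i * Qfun γ j t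
        + (hfun γ u) ^ (i + j) * hfun γ t)
      = (Qfun γ (i + j) t * (u ^ (-γ) * (max t u)⁻¹ * (hfun γ u) ^ 0)
          - Qfun γ i t * (u ^ (-γ) * (max t u)⁻¹ * (hfun γ u) ^ j))
        - Qfun γ j t * (u ^ (-γ) * (max t u)⁻¹ * (hfun γ u) ^ i)
        + hfun γ t * (u ^ (-γ) * (max t u)⁻¹ * (hfun γ u) ^ (i + j)) := by
    intro u; ring
  have g0 := h0.const_mul (Qfun γ (i + j) t)
  have gj := hj.const_mul (Qfun γ i t)
  have gi := hi.const_mul (Qfun γ j t)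
  have gij := h1.const_mul (hfun γ t)
  have g12 : IntegrableOn (fun u : ℝ => Qfun γ (i + j) t * (u ^ (-γ) * (max t u)⁻¹ * (hfun γ u) ^ 0)
      - Qfun γ i t * (u ^ (-γ) * (max t u)⁻¹ * (hfun γ u) ^ j)) (Set.Ioi 1) := g0.sub gj
  have g123 : IntegrableOn (fun u : ℝ => (Qfun γ (i + j) t * (u ^ (-γ) * (max t u)⁻¹ * (hfun γ u) ^ 0)
      - Qfun γ i t * (u ^ (-γ) * (max t u)⁻¹ * (hfun γ u) ^ j))
      - Qfun γ j t * (u ^ (-γ) * (max t u)⁻¹ * (hfun γ u) ^ i)) (Set.Ioi 1) := g12.sub gi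
  rw [MeasureTheory.integral_congr_ae (Filter.Eventually.of_forall expand)] at main
  rw [integral_add g123 gij, integral_sub g12 gi, integral_sub g0 gj,
    integral_const_mul, integral_const_mul, integral_const_mul, integral_const_mul] at main
  have e0 : (∫ u in Set.Ioi (1:ℝ), u ^ (-γ) * (max t u)⁻¹ * (hfun γ u) ^ 0) = hfun γ t := by
    rw [← Qfun_zero γ t]; rfl
  have ej : (∫ u in Set.Ioi (1:ℝ), u ^ (-γ) * (max t u)⁻¹ * (hfun γ u) ^ j) = Qfun γ j t := rfl
  have ei : (∫ u in Set.Ioi (1:ℝ), u ^ (-γ) * (max t u)⁻¹ * (hfun γ u) ^ i) = Qfun γ i t := rfl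
  have eij : (∫ u in Set.Ioi (1:ℝ), u ^ (-γ) * (max t u)⁻¹ * (hfun γ u) ^ (i + j))
      = Qfun γ (i + j) t := rfl
  rw [e0, ej, ei, eij] at main
  nlinarith [main]

theorem stmt_12 (γ a b : ℝ) (hγ : 0 < γ) (hγ1 : γ ≤ 1) (ha : 1 ≤ a) (hab : a ≤ b)
    (i j : ℕ) :
    (∫ t in a..b, t ^ (-γ) * Qfun γ i t * Qfun γ j t)
      ≤ ∫ t in a..b, t ^ (-γ) * hfun γ t * Qfun γ (i + j) t := by
  have hIcc : Set.uIcc a b = Set.Icc a b := Set.uIcc_of_le hab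
  have hpos : ∀ t ∈ Set.Icc a b, (0:ℝ) < t := fun t ht => lt_of_lt_of_le one_pos (ha.trans ht.1)
  have hrpow_anti : ∀ x ∈ Set.Icc a b, ∀ y ∈ Set.Icc a b, x ≤ y → y ^ (-γ) ≤ x ^ (-γ) := by
    intro x hx y hy hxy
    exact Real.rpow_le_rpow_of_nonpos (hpos x hx) hxy (by linarith)
  have int1 : IntervalIntegrable (fun t => t ^ (-γ) * Qfun γ i t * Qfun γ j t) volume a b := by
    apply AntitoneOn.intervalIntegrable
    rw [hIcc]
    intro x hx y hy hxy
    have h1 := Qfun_anti hγ i hxy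
    have h2 := Qfun_anti hγ j hxy
    have h3 := hrpow_anti x hx y hy hxy
    have n1 := Qfun_nonneg γ i y
    have n2 := Qfun_nonneg γ j y
    have n3 := Qfun_nonneg γ i x
    have hx0 : (0:ℝ) ≤ x ^ (-γ) := Real.rpow_nonneg (hpos x hx).le _
    have hy0 : (0:ℝ) ≤ y ^ (-γ) := Real.rpow_nonneg (hpos y hy).le _
    exact mul_le_mul (mul_le_mul h3 h1 n1 hx0) h2 n2 (by positivity)
  have int2 : IntervalIntegrable (fun t => t ^ (-γ) * hfun γ t * Qfun γ (i + j) t) volume a b := by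
    apply AntitoneOn.intervalIntegrable
    rw [hIcc]
    intro x hx y hy hxy
    have h1 := hfun_anti hγ hxy
    have h2 := Qfun_anti hγ (i + j) hxy
    have h3 := hrpow_anti x hx y hy hxy
    have n1 := Qfun_nonneg γ (i + j) y
    have n2 := hfun_nonneg γ y
    have n3 := hfun_nonneg γ x
    have hx0 : (0:ℝ) ≤ x ^ (-γ) := Real.rpow_nonneg (hpos x hx).le _
    have hy0 : (0:ℝ) ≤ y ^ (-γ) := Real.rpow_nonneg (hpos y hy).le _
    exact mul_le_mul (mul_le_mul h3 h1 n2 hx0) h2 n1 (by positivity)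
  apply intervalIntegral.integral_mono_on hab int1 int2
  intro t ht
  have hk := key_ineq hγ i j t
  have ht0 : (0:ℝ) ≤ t ^ (-γ) := Real.rpow_nonneg (hpos t ht).le _
  calc t ^ (-γ) * Qfun γ i t * Qfun γ j t = t ^ (-γ) * (Qfun γ i t * Qfun γ j t) := by ring
    _ ≤ t ^ (-γ) * (hfun γ t * Qfun γ (i + j) t) := mul_le_mul_of_nonneg_left hk ht0
    _ = t ^ (-γ) * hfun γ t * Qfun γ (i + j) t := by ring
end

section
/- Let a, b > 0, t₀ > 1, and let y, z : [1, ∞) → [0, ∞) be continuously differentiable with y(t₀) = y₀, z(t₀) = z₀, satisfying |y'(t)| ≤ t^{-2} h₀(t) b y(t) + t^{-2} a z(t) and |z'(t)| ≤ t^{-2} h₀(t) b z(t) + t^{-γ} a y(t), where h₀(t) = ∫₁ᵗ s^{-γ} ds. Define ȳ(t), z̄(t) by (y(t), z(t)) = (ȳ(t), z̄(t)) exp(b|h(t) - h(t₀)|) with h(t) = ∫₁^∞ s^{-γ}(max(t,s))^{-1} ds. Then for t ≥ t₀ with γ t₀^γ ≥ 2a², one has ȳ(t) ≤ 2(y₀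 + a z₀ t₀^{-1}) and z̄(t) ≤ z₀ + 2a(y₀ + a z₀ t₀^{-1}) h₀(t). -/
open MeasureTheory Real

section auxstmt19
open Set Filter

lemma rpow_contOn (γ : ℝ) : ContinuousOn (fun s : ℝ => s ^ (-γ)) (Set.Ioi 0) :=
  fun x hx => (Real.continuousAt_rpow_const x (-γ) (Or.inl (ne_of_gt hx))).continuousWithinAt

lemma rpow_meas (γ : ℝ) : Measurable (fun s : ℝ => s ^ (-γ)) := by fun_prop

lemma rpow_intInt (γ : ℝ) {u v : ℝ} (hu : 0 < u) (hv : 0 < v) :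
    IntervalIntegrable (fun s : ℝ => s ^ (-γ)) volume u v := by
  apply ((rpow_contOn γ).mono (fun x hx => ?_)).intervalIntegrable
  exact lt_of_lt_of_le (lt_min hu hv) hx.1

lemma h0_hasDerivAt (γ : ℝ) {t : ℝ} (ht : 0 < t) : HasDerivAt (h0 γ) (t ^ (-γ)) t := by
  unfold h0
  apply intervalIntegral.integral_hasDerivAt_right (rpow_intInt γ one_pos ht)
  · exact (rpow_meas γ).stronglyMeasurable.stronglyMeasurableAtFilter
  · exact Real.continuousAt_rpow_const t (-γ) (Or.inl (ne_of_gt ht))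

lemma h0_sub (γ : ℝ) {u v : ℝ} (hu : 0 < u) (hv : 0 < v) :
    h0 γ v - h0 γ u = ∫ s in u..v, s ^ (-γ) := by
  unfold h0
  rw [eq_comm, ← intervalIntegral.integral_add_adjacent_intervals
    (rpow_intInt γ one_pos hu) (rpow_intInt γ hu hv)]
  ring

lemma h0_mono (γ : ℝ) {u v : ℝ} (hu : 0 < u) (huv : u ≤ v) : h0 γ u ≤ h0 γ v := by
  have := h0_sub γ hu (lt_of_lt_of_le hu huv)
  have h2 : 0 ≤ ∫ s in u..v, s ^ (-γ) := by
    apply intervalIntegral.integral_nonneg huv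
    intro x hx
    exact Real.rpow_nonneg (le_trans hu.le hx.1) _
  linarith

lemma h0_one (γ : ℝ) : h0 γ 1 = 0 := by simp [h0]

lemma h0_nonneg (γ : ℝ) {t : ℝ} (ht : 1 ≤ t) : 0 ≤ h0 γ t := by
  have := h0_mono γ one_pos ht; rw [h0_one] at this; exact this

lemma h0_cont (γ : ℝ) {t : ℝ} (ht : 0 < t) : ContinuousAt (h0 γ) t :=
  (h0_hasDerivAt γ ht).continuousAt


lemma hfun_eq {γ : ℝ} (hγ : 0 < γ) {t : ℝ} (ht : 1 ≤ t) :
    hfun γ t = h0 γ t * t⁻¹ + t ^ (-γ) / γ := by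
  have ht0 : (0:ℝ) < t := lt_of_lt_of_le one_pos ht
  have hsplit : Set.Ioc (1:ℝ) t ∪ Set.Ioi t = Set.Ioi (1:ℝ) := Set.Ioc_union_Ioi_eq_Ioi ht
  have hint1 : IntegrableOn (fun s : ℝ => s ^ (-γ) * (max t s)⁻¹) (Set.Ioc 1 t) := by
    apply (ContinuousOn.integrableOn_Icc ?_).mono_set Set.Ioc_subset_Icc_self
    apply ContinuousOn.mul ((rpow_contOn γ).mono (fun x hx => lt_of_lt_of_le one_pos hx.1))
    apply ContinuousOn.inv₀ ((continuous_const.max continuous_id).continuousOn)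
    intro x hx
    exact ne_of_gt (lt_of_lt_of_le ht0 (le_max_left _ _))
  have hkey : ∀ s ∈ Set.Ioi t, s ^ (-γ) * (max t s)⁻¹ = s ^ (-γ - 1) := by
    intro s hs
    have hs0 : (0:ℝ) < s := lt_trans ht0 hs
    rw [max_eq_right (le_of_lt hs), ← Real.rpow_neg_one s, ← Real.rpow_add hs0]
    ring_nf
  have hint2 : IntegrableOn (fun s : ℝ => s ^ (-γ) * (max t s)⁻¹) (Set.Ioi t) := by
    apply (integrableOn_Ioi_rpow_of_lt (by linarith : -γ - 1 < -1) ht0).congr_fun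
      (fun s hs => (hkey s hs).symm) measurableSet_Ioi
  have h2 : ∫ s in Set.Ioi t, s ^ (-γ) * (max t s)⁻¹ = t ^ (-γ) / γ := by
    rw [setIntegral_congr_fun measurableSet_Ioi hkey,
      integral_Ioi_rpow_of_lt (by linarith) ht0]
    rw [show -γ - 1 + 1 = -γ by ring]
    rw [neg_div, div_neg, neg_neg]
  have h1 : ∫ s in Set.Ioc (1:ℝ) t, s ^ (-γ) * (max t s)⁻¹ = h0 γ t * t⁻¹ := by
    rw [setIntegral_congr_fun measurableSet_Ioc
      (fun s hs => by rw [max_eq_left hs.2])]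
    rw [integral_mul_const, h0, intervalIntegral.integral_of_le ht]
  rw [hfun, ← hsplit, setIntegral_union (Set.Ioc_disjoint_Ioi le_rfl) measurableSet_Ioi hint1 hint2,
    h1, h2]


lemma hfun_hasDerivAt {γ : ℝ} (hγ : 0 < γ) {t : ℝ} (ht : 1 < t) :
    HasDerivAt (hfun γ) (-(t ^ (-2:ℝ) * h0 γ t)) t := by
  have ht0 : (0:ℝ) < t := lt_trans one_pos ht
  have hF : HasDerivAt (fun u : ℝ => h0 γ u * u⁻¹ + u ^ (-γ) / γ)
      (t ^ (-γ) * t⁻¹ + h0 γ t * (-(t^2)⁻¹) + (-γ * t ^ (-γ - 1)) / γ) t := by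
    exact ((h0_hasDerivAt γ ht0).mul (hasDerivAt_inv (ne_of_gt ht0))).add
      ((Real.hasDerivAt_rpow_const (Or.inl (ne_of_gt ht0))).div_const γ)
  have heq : t ^ (-γ) * t⁻¹ + h0 γ t * (-(t^2)⁻¹) + (-γ * t ^ (-γ - 1)) / γ
      = -(t ^ (-2:ℝ) * h0 γ t) := by
    have h1 : t ^ (-γ) * t⁻¹ = t ^ (-γ - 1) := by
      rw [← Real.rpow_neg_one t, ← Real.rpow_add ht0]; ring_nf
    have h2 : (t^2)⁻¹ = t ^ (-2:ℝ) := by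
      rw [← Real.rpow_natCast t 2, ← Real.rpow_neg (le_of_lt ht0)]
      norm_num
    rw [h1, h2]
    field_simp
    ring
  rw [← heq]
  apply hF.congr_of_eventuallyEq
  filter_upwards [eventually_gt_nhds ht] with u hu
  exact hfun_eq hγ (le_of_lt hu)

lemma hfun_sub {γ : ℝ} (hγ : 0 < γ) {u v : ℝ} (hu : 1 < u) (huv : u ≤ v) :
    hfun γ v - hfun γ u = ∫ s in u..v, -(s ^ (-2:ℝ) * h0 γ s) := by
  rw [eq_comm]
  apply intervalIntegral.integral_eq_sub_of_hasDerivAt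
  · intro s hs
    rw [Set.uIcc_of_le huv] at hs
    exact hfun_hasDerivAt hγ (lt_of_lt_of_le hu hs.1)
  · apply ContinuousOn.intervalIntegrable
    apply ContinuousOn.neg
    apply ContinuousOn.mul
    · exact (rpow_contOn 2).mono (fun x hx => by
        rw [Set.uIcc_of_le huv] at hx; exact lt_trans one_pos (lt_of_lt_of_le hu hx.1))
    · intro x hx
      rw [Set.uIcc_of_le huv] at hx
      exact ((h0_hasDerivAt γ (lt_trans one_pos (lt_of_lt_of_le hu hx.1))).continuousAt).continuousWithinAt

lemma hfun_mono {γ : ℝ} (hγ : 0 < γ) {u v : ℝ} (hu : 1 < u) (huv : u ≤ v) :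
    hfun γ v ≤ hfun γ u := by
  have h := hfun_sub hγ hu huv
  have h2 : ∫ s in u..v, -(s ^ (-2:ℝ) * h0 γ s) ≤ 0 := by
    rw [intervalIntegral.integral_neg, neg_nonpos]
    apply intervalIntegral.integral_nonneg huv
    intro x hx
    exact mul_nonneg (Real.rpow_nonneg (by linarith [hx.1] : (0:ℝ) ≤ x) _)
      (h0_nonneg γ (le_trans hu.le hx.1))
  linarith


lemma core (γ a b t₀ : ℝ) (hγ : 0 < γ) (hγ1 : γ ≤ 1)
    (ha : 0 < a) (hb : 0 < b) (ht₀ : 1 < t₀)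
    (y z y' z' : ℝ → ℝ)
    (hypos : ∀ t ∈ Set.Ici (1:ℝ), 0 ≤ y t) (hzpos : ∀ t ∈ Set.Ici (1:ℝ), 0 ≤ z t)
    (hyd : ∀ t ∈ Set.Ici (1:ℝ), HasDerivAt y (y' t) t)
    (hzd : ∀ t ∈ Set.Ici (1:ℝ), HasDerivAt z (z' t) t)
    (hy'c : ContinuousOn y' (Set.Ici (1:ℝ))) (hz'c : ContinuousOn z' (Set.Ici (1:ℝ)))
    (hy' : ∀ t ∈ Set.Ici (1:ℝ), |y' t| ≤ t ^ (-2 : ℝ) * h0 γ t * b * y t + t ^ (-2 : ℝ) * a * z t)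
    (hz' : ∀ t ∈ Set.Ici (1:ℝ), |z' t| ≤ t ^ (-2 : ℝ) * h0 γ t * b * z t + t ^ (-γ) * a * y t)
    (hsize : 2 * a ^ 2 ≤ γ * t₀ ^ γ) :
    ∀ t, t₀ ≤ t →
      y t * Real.exp (b * (hfun γ t - hfun γ t₀)) ≤ 2 * (y t₀ + a * z t₀ * t₀⁻¹) ∧
      z t * Real.exp (b * (hfun γ t - hfun γ t₀))
        ≤ z t₀ + 2 * a * (y t₀ + a * z t₀ * t₀⁻¹) * (h0 γ t - h0 γ t₀) := by
  set E : ℝ → ℝ := fun s => Real.exp (b * (hfun γ s - hfun γ t₀)) with hEdef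
  set Y : ℝ → ℝ := fun s => y s * E s with hYdef
  set Z : ℝ → ℝ := fun s => z s * E s with hZdef
  set YD : ℝ → ℝ := fun s => y' s * E s + y s * (E s * (b * -(s ^ (-2:ℝ) * h0 γ s))) with hYDdef
  set ZD : ℝ → ℝ := fun s => z' s * E s + z s * (E s * (b * -(s ^ (-2:ℝ) * h0 γ s))) with hZDdef
  have hEpos : ∀ s, 0 < E s := fun s => Real.exp_pos _
  have hE1 : E t₀ = 1 := by simp [hEdef]
  have hYt₀ : Y t₀ = y t₀ := by rw [hYdef]; simp [hE1]
  have hZt₀ : Z t₀ = z t₀ := by rw [hZdef]; simp [hE1]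
  have hone : ∀ s : ℝ, t₀ ≤ s → (1:ℝ) ≤ s := fun s hs => le_trans (le_of_lt ht₀) hs
  have honelt : ∀ s : ℝ, t₀ ≤ s → (1:ℝ) < s := fun s hs => lt_of_lt_of_le ht₀ hs
  have hspos : ∀ s : ℝ, t₀ ≤ s → (0:ℝ) < s := fun s hs => lt_trans one_pos (honelt s hs)
  -- derivatives
  have hEd : ∀ s : ℝ, 1 < s → HasDerivAt E (E s * (b * -(s ^ (-2:ℝ) * h0 γ s))) s := by
    intro s hs
    exact (((hfun_hasDerivAt hγ hs).sub_const _).const_mul b).exp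
  have hYd2 : ∀ s : ℝ, 1 < s → HasDerivAt Y (YD s) s :=
    fun s hs => (hyd s (le_of_lt hs)).mul (hEd s hs)
  have hZd2 : ∀ s : ℝ, 1 < s → HasDerivAt Z (ZD s) s :=
    fun s hs => (hzd s (le_of_lt hs)).mul (hEd s hs)
  -- continuity
  have hEc : ∀ s : ℝ, 1 < s → ContinuousAt E s := fun s hs => (hEd s hs).continuousAt
  have hcomm : ∀ s : ℝ, 1 < s → ContinuousAt (fun u : ℝ => E u * (b * -(u ^ (-2:ℝ) * h0 γ u))) s := by
    intro s hs
    have h1 : (0:ℝ) < s := lt_trans one_pos hs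
    exact (hEc s hs).mul ((continuousAt_const.mul (((Real.continuousAt_rpow_const s (-2)
      (Or.inl (ne_of_gt h1))).mul (h0_hasDerivAt γ h1).continuousAt).neg)))
  have hYDc : ∀ s : ℝ, 1 < s → ContinuousAt YD s := by
    intro s hs
    exact ((hy'c.continuousAt (Ici_mem_nhds hs)).mul (hEc s hs)).add
      (((hyd s (le_of_lt hs)).continuousAt).mul (hcomm s hs))
  have hZDc : ∀ s : ℝ, 1 < s → ContinuousAt ZD s := by
    intro s hs
    exact ((hz'c.continuousAt (Ici_mem_nhds hs)).mul (hEc s hs)).add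
      (((hzd s (le_of_lt hs)).continuousAt).mul (hcomm s hs))
  have hYc : ∀ s : ℝ, 1 < s → ContinuousAt Y s := fun s hs => (hYd2 s hs).continuousAt
  clear_value E Y Z YD ZD
  -- pointwise derivative bounds
  have hYDb : ∀ s : ℝ, t₀ ≤ s → YD s ≤ a * s ^ (-2:ℝ) * Z s := by
    intro s hs
    have h1 := hy' s (hone s hs)
    have h2 : y' s ≤ s ^ (-2:ℝ) * h0 γ s * b * y s + s ^ (-2:ℝ) * a * z s :=
      le_trans (le_abs_self _) h1
    have h3 : YD s = (y' s - s ^ (-2:ℝ) * h0 γ s * b * y s) * E s := by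
      rw [hYDdef]; ring
    rw [h3, hZdef]
    have h4 : (y' s - s ^ (-2:ℝ) * h0 γ s * b * y s) ≤ s ^ (-2:ℝ) * a * z s := by linarith
    calc (y' s - s ^ (-2:ℝ) * h0 γ s * b * y s) * E s
        ≤ (s ^ (-2:ℝ) * a * z s) * E s :=
          mul_le_mul_of_nonneg_right h4 (le_of_lt (hEpos s))
      _ = a * s ^ (-2:ℝ) * (z s * E s) := by ring
  have hZDb : ∀ s : ℝ, t₀ ≤ s → ZD s ≤ a * s ^ (-γ) * Y s := by
    intro s hs
    have h1 := hz' s (hone s hs)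
    have h2 : z' s ≤ s ^ (-2:ℝ) * h0 γ s * b * z s + s ^ (-γ) * a * y s :=
      le_trans (le_abs_self _) h1
    have h3 : ZD s = (z' s - s ^ (-2:ℝ) * h0 γ s * b * z s) * E s := by
      rw [hZDdef]; ring
    rw [h3, hYdef]
    have h4 : (z' s - s ^ (-2:ℝ) * h0 γ s * b * z s) ≤ s ^ (-γ) * a * y s := by linarith
    calc (z' s - s ^ (-2:ℝ) * h0 γ s * b * z s) * E s
        ≤ (s ^ (-γ) * a * y s) * E s :=
          mul_le_mul_of_nonneg_right h4 (le_of_lt (hEpos s))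
      _ = a * s ^ (-γ) * (y s * E s) := by ring
  -- interval integrability of derivatives
  have hYDint : ∀ u v : ℝ, t₀ ≤ u → u ≤ v → IntervalIntegrable YD volume u v := by
    intro u v hu huv
    apply ContinuousOn.intervalIntegrable
    intro s hs
    rw [Set.uIcc_of_le huv] at hs
    exact (hYDc s (honelt s (le_trans hu hs.1))).continuousWithinAt
  have hZDint : ∀ u v : ℝ, t₀ ≤ u → u ≤ v → IntervalIntegrable ZD volume u v := by
    intro u v hu huv
    apply ContinuousOn.intervalIntegrable
    intro s hs
    rw [Set.uIcc_of_le huv] at hs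
    exact (hZDc s (honelt s (le_trans hu hs.1))).continuousWithinAt
  -- fundamental theorem
  have hYfund : ∀ v, t₀ ≤ v → (∫ s in t₀..v, YD s) = Y v - Y t₀ := by
    intro v hv
    apply intervalIntegral.integral_eq_sub_of_hasDerivAt
    · intro s hs; rw [Set.uIcc_of_le hv] at hs; exact hYd2 s (honelt s hs.1)
    · exact hYDint t₀ v le_rfl hv
  have hZfund : ∀ v, t₀ ≤ v → (∫ s in t₀..v, ZD s) = Z v - Z t₀ := by
    intro v hv
    apply intervalIntegral.integral_eq_sub_of_hasDerivAt
    · intro s hs; rw [Set.uIcc_of_le hv] at hs; exact hZd2 s (honelt s hs.1)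
    · exact hZDint t₀ v le_rfl hv
  -- Z bound given Y bound
  have hZbd : ∀ K : ℝ, 0 ≤ K → ∀ v, t₀ ≤ v → (∀ σ ∈ Set.Icc t₀ v, Y σ ≤ K) →
      Z v ≤ z t₀ + a * K * (h0 γ v - h0 γ t₀) := by
    intro K hK v hv hYK
    have hid := hZfund v hv
    have hmono : (∫ s in t₀..v, ZD s) ≤ ∫ s in t₀..v, a * K * s ^ (-γ) := by
      apply intervalIntegral.integral_mono_on hv (hZDint t₀ v le_rfl hv)
      · exact (rpow_intInt γ (hspos t₀ le_rfl) (hspos v hv)).const_mul _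
      · intro s hs
        have h1 := hZDb s hs.1
        have h2 : Y s ≤ K := hYK s hs
        have h3 : 0 ≤ s ^ (-γ) := Real.rpow_nonneg (le_of_lt (hspos s hs.1)) _
        have h4 : a * s ^ (-γ) * Y s ≤ a * s ^ (-γ) * K :=
          mul_le_mul_of_nonneg_left h2 (mul_nonneg ha.le h3)
        have h5 : a * s ^ (-γ) * K = a * K * s ^ (-γ) := by ring
        linarith
    rw [intervalIntegral.integral_const_mul, ← h0_sub γ (hspos t₀ le_rfl) (hspos v hv)] at hmono
    rw [hZt₀] at hid
    linarith
  -- Y estimate given Y bound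
  have hYest : ∀ K : ℝ, 0 ≤ K → ∀ v, t₀ ≤ v → (∀ σ ∈ Set.Icc t₀ v, Y σ ≤ K) →
      Y v ≤ y t₀ + a * z t₀ * t₀⁻¹ + a ^ 2 * K * (t₀ ^ (-γ) / γ) := by
    intro K hK v hv hYK
    set G : ℝ → ℝ := fun s => a * z t₀ * s ^ (-2:ℝ)
      + a ^ 2 * K * (s ^ (-2:ℝ) * (h0 γ s - h0 γ t₀)) with hGdef
    set F : ℝ → ℝ := fun s => -(a * z t₀) * s⁻¹
      + a ^ 2 * K * (-((h0 γ s - h0 γ t₀) * s⁻¹) - s ^ (-γ) / γ) with hFdef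
    have hFd : ∀ s : ℝ, 1 < s → HasDerivAt F (G s) s := by
      intro s hs
      have hs0 : (0:ℝ) < s := lt_trans one_pos hs
      have c1 : HasDerivAt (fun u : ℝ => -(a * z t₀) * u⁻¹) (-(a * z t₀) * -(s^2)⁻¹) s :=
        (hasDerivAt_inv (ne_of_gt hs0)).const_mul _
      have c2 : HasDerivAt (fun u : ℝ => (h0 γ u - h0 γ t₀) * u⁻¹)
          (s ^ (-γ) * s⁻¹ + (h0 γ s - h0 γ t₀) * -(s^2)⁻¹) s :=
        ((h0_hasDerivAt γ hs0).sub_const _).mul (hasDerivAt_inv (ne_of_gt hs0))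
      have c3 : HasDerivAt (fun u : ℝ => u ^ (-γ) / γ) (-γ * s ^ (-γ - 1) / γ) s :=
        (Real.hasDerivAt_rpow_const (Or.inl (ne_of_gt hs0))).div_const _
      have c4 := c1.add ((c2.neg.sub c3).const_mul (a ^ 2 * K))
      have heq : -(a * z t₀) * -(s^2)⁻¹
          + a ^ 2 * K * (-(s ^ (-γ) * s⁻¹ + (h0 γ s - h0 γ t₀) * -(s^2)⁻¹)
            - -γ * s ^ (-γ - 1) / γ)
          = a * z t₀ * s ^ (-2:ℝ) + a ^ 2 * K * (s ^ (-2:ℝ) * (h0 γ s - h0 γ t₀)) := by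
        have e1 : (s^2)⁻¹ = s ^ (-2:ℝ) := by
          rw [← Real.rpow_natCast s 2, ← Real.rpow_neg hs0.le]; norm_num
        have e2 : s ^ (-γ) * s⁻¹ = s ^ (-γ - 1) := by
          rw [← Real.rpow_neg_one s, ← Real.rpow_add hs0]; ring_nf
        rw [← e1, e2]
        field_simp
        ring
      show HasDerivAt F (a * z t₀ * s ^ (-2:ℝ)
        + a ^ 2 * K * (s ^ (-2:ℝ) * (h0 γ s - h0 γ t₀))) s
      rw [← heq]
      exact c4
    have hGint : IntervalIntegrable G volume t₀ v := by
      apply ContinuousOn.intervalIntegrable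
      intro s hs
      rw [Set.uIcc_of_le hv] at hs
      have hs1 : (1:ℝ) < s := honelt s hs.1
      have hs0 : (0:ℝ) < s := lt_trans one_pos hs1
      apply ContinuousWithinAt.mono _ (Set.subset_univ _)
      apply ContinuousAt.continuousWithinAt
      exact (continuousAt_const.mul (Real.continuousAt_rpow_const s (-2)
          (Or.inl (ne_of_gt hs0)))).add
        (continuousAt_const.mul ((Real.continuousAt_rpow_const s (-2)
          (Or.inl (ne_of_gt hs0))).mul (((h0_hasDerivAt γ hs0).continuousAt).sub
            continuousAt_const)))
    clear_value F G
    have hFTC : (∫ s in t₀..v, G s) = F v - F t₀ := by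
      apply intervalIntegral.integral_eq_sub_of_hasDerivAt
      · intro s hs; rw [Set.uIcc_of_le hv] at hs; exact hFd s (honelt s hs.1)
      · exact hGint
    have hmono : (∫ s in t₀..v, YD s) ≤ ∫ s in t₀..v, G s := by
      apply intervalIntegral.integral_mono_on hv (hYDint t₀ v le_rfl hv) hGint
      intro s hs
      have h1 := hYDb s hs.1
      have h2 : Z s ≤ z t₀ + a * K * (h0 γ s - h0 γ t₀) :=
        hZbd K hK s hs.1 (fun σ hσ => hYK σ ⟨hσ.1, le_trans hσ.2 hs.2⟩)
      have h3 : 0 ≤ s ^ (-2:ℝ) := Real.rpow_nonneg (hspos s hs.1).le _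
      have h4 : a * s ^ (-2:ℝ) * Z s
          ≤ a * s ^ (-2:ℝ) * (z t₀ + a * K * (h0 γ s - h0 γ t₀)) :=
        mul_le_mul_of_nonneg_left h2 (mul_nonneg ha.le h3)
      have h5 : a * s ^ (-2:ℝ) * (z t₀ + a * K * (h0 γ s - h0 γ t₀)) = G s := by
        rw [hGdef]; ring
      linarith
    have hΔv : 0 ≤ h0 γ v - h0 γ t₀ := by
      linarith [h0_mono γ (hspos t₀ le_rfl) hv]
    have hz0 := hzpos t₀ (Set.mem_Ici.mpr (hone t₀ le_rfl))
    have hvinv : (0:ℝ) ≤ v⁻¹ := inv_nonneg.mpr (hspos v hv).le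
    have hvg : (0:ℝ) ≤ v ^ (-γ) := Real.rpow_nonneg (hspos v hv).le _
    have haK : (0:ℝ) ≤ a ^ 2 * K := mul_nonneg (sq_nonneg a) hK
    have hFv : F v ≤ 0 := by
      have e : F v = -(a * z t₀ * v⁻¹) - a ^ 2 * K * ((h0 γ v - h0 γ t₀) * v⁻¹)
          - a ^ 2 * K * (v ^ (-γ) / γ) := by rw [hFdef]; ring
      rw [e]
      have p1 : 0 ≤ a * z t₀ * v⁻¹ := mul_nonneg (mul_nonneg ha.le hz0) hvinv
      have p2 : 0 ≤ a ^ 2 * K * ((h0 γ v - h0 γ t₀) * v⁻¹) :=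
        mul_nonneg haK (mul_nonneg hΔv hvinv)
      have p3 : 0 ≤ a ^ 2 * K * (v ^ (-γ) / γ) :=
        mul_nonneg haK (div_nonneg hvg hγ.le)
      linarith
    have hFt₀ : F t₀ = -(a * z t₀) * t₀⁻¹ - a ^ 2 * K * (t₀ ^ (-γ) / γ) := by
      rw [hFdef]; simp; ring
    have hfin := hYfund v hv
    rw [hYt₀] at hfin
    have : (∫ s in t₀..v, YD s) ≤ a * z t₀ * t₀⁻¹ + a ^ 2 * K * (t₀ ^ (-γ) / γ) := by
      rw [hFTC, hFt₀] at hmono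
      have e9 : F v - (-(a * z t₀) * t₀⁻¹ - a ^ 2 * K * (t₀ ^ (-γ) / γ))
          = F v + a * z t₀ * t₀⁻¹ + a ^ 2 * K * (t₀ ^ (-γ) / γ) := by ring
      rw [e9] at hmono
      refine le_trans hmono ?_
      have := hFv
      linarith
    linarith
  -- constants
  obtain ⟨M, hMdef⟩ : ∃ M : ℝ, M = 2 * (y t₀ + a * z t₀ * t₀⁻¹) := ⟨_, rfl⟩
  have hy0 := hypos t₀ (Set.mem_Ici.mpr (hone t₀ le_rfl))
  have hz0 := hzpos t₀ (Set.mem_Ici.mpr (hone t₀ le_rfl))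
  have ht₀inv : (0:ℝ) ≤ t₀⁻¹ := inv_nonneg.mpr (hspos t₀ le_rfl).le
  have hazt : (0:ℝ) ≤ a * z t₀ * t₀⁻¹ := mul_nonneg (mul_nonneg ha.le hz0) ht₀inv
  have hM0 : 0 ≤ M := by rw [hMdef]; linarith
  have hhalf : a ^ 2 * (t₀ ^ (-γ) / γ) ≤ 1 / 2 := by
    have ht₀γ : 0 < t₀ ^ γ := Real.rpow_pos_of_pos (hspos t₀ le_rfl) _
    have hneg : t₀ ^ (-γ) = (t₀ ^ γ)⁻¹ := Real.rpow_neg (hspos t₀ le_rfl).le γ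
    have hγt : 0 < γ * t₀ ^ γ := mul_pos hγ ht₀γ
    have hc : (γ * t₀ ^ γ) * (γ * t₀ ^ γ)⁻¹ = 1 := mul_inv_cancel₀ (ne_of_gt hγt)
    have he : t₀ ^ (-γ) / γ = (γ * t₀ ^ γ)⁻¹ := by rw [hneg, mul_inv]; ring
    rw [he]
    nlinarith [mul_nonneg (sub_nonneg.mpr hsize) (inv_nonneg.mpr hγt.le), hc]
  -- bootstrap
  have key : ∀ ε : ℝ, 0 < ε → ∀ v, t₀ ≤ v → Y v < M + ε := by
    intro ε hε v hv
    by_contra hcon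
    push_neg at hcon
    have hYcont : ContinuousOn Y (Set.Icc t₀ v) :=
      fun s hs => (hYc s (honelt s hs.1)).continuousWithinAt
    have hScl : IsClosed {s : ℝ | s ∈ Set.Icc t₀ v ∧ M + ε ≤ Y s} := by
      have he : {s : ℝ | s ∈ Set.Icc t₀ v ∧ M + ε ≤ Y s}
          = Set.Icc t₀ v ∩ Y ⁻¹' Set.Ici (M + ε) := by
        ext s; simp [Set.mem_Ici, and_comm]
      rw [he]
      exact hYcont.preimage_isClosed_of_isClosed isClosed_Icc isClosed_Ici
    have hSne : Set.Nonempty {s : ℝ | s ∈ Set.Icc t₀ v ∧ M + ε ≤ Y s} :=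
      ⟨v, ⟨⟨hv, le_rfl⟩, hcon⟩⟩
    have hSbdd : BddBelow {s : ℝ | s ∈ Set.Icc t₀ v ∧ M + ε ≤ Y s} :=
      ⟨t₀, fun s hs => hs.1.1⟩
    obtain ⟨t₁, ht₁def⟩ : ∃ t₁ : ℝ, t₁ = sInf {s : ℝ | s ∈ Set.Icc t₀ v ∧ M + ε ≤ Y s} :=
      ⟨_, rfl⟩
    have ht₁S : t₁ ∈ {s : ℝ | s ∈ Set.Icc t₀ v ∧ M + ε ≤ Y s} := by
      rw [ht₁def]; exact hScl.csInf_mem hSne hSbdd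
    have ht₁0 : t₀ ≤ t₁ := ht₁S.1.1
    have ht₁v : t₁ ≤ v := ht₁S.1.2
    have hYt₁ : M + ε ≤ Y t₁ := ht₁S.2
    have ht₀lt : t₀ < t₁ := by
      rcases lt_or_eq_of_le ht₁0 with h | h
      · exact h
      · exfalso
        rw [← h, hYt₀] at hYt₁
        rw [hMdef] at hYt₁
        linarith
    have hbb : ∀ σ ∈ Set.Icc t₀ t₁, Y σ ≤ M + ε := by
      intro σ hσ
      rcases lt_or_eq_of_le hσ.2 with h | h
      · by_contra hc
        push_neg at hc
        have hmem : σ ∈ {s : ℝ | s ∈ Set.Icc t₀ v ∧ M + ε ≤ Y s} :=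
          ⟨⟨hσ.1, le_trans (le_of_lt h) ht₁v⟩, hc.le⟩
        have := csInf_le hSbdd hmem
        rw [← ht₁def] at this
        exact absurd this (not_le.mpr h)
      · subst h
        have hlim : Filter.Tendsto Y (nhdsWithin σ (Set.Iio σ)) (nhds (Y σ)) :=
          (hYc σ (honelt σ ht₁0)).continuousWithinAt
        apply le_of_tendsto hlim
        filter_upwards [Ioo_mem_nhdsLT ht₀lt] with u hu
        have hnot : u ∉ {s : ℝ | s ∈ Set.Icc t₀ v ∧ M + ε ≤ Y s} := by
          intro hu'
          have := csInf_le hSbdd hu'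
          rw [← ht₁def] at this
          exact absurd this (not_le.mpr hu.2)
        by_contra hc
        push_neg at hc
        exact hnot ⟨⟨hu.1.le, le_trans hu.2.le ht₁v⟩, hc.le⟩
    have hMε0 : (0:ℝ) ≤ M + ε := by linarith
    have hest := hYest (M + ε) hMε0 t₁ ht₁0 hbb
    have h2 : a ^ 2 * (M + ε) * (t₀ ^ (-γ) / γ) ≤ (M + ε) * (1 / 2) := by
      have h3 : (M + ε) * (a ^ 2 * (t₀ ^ (-γ) / γ)) ≤ (M + ε) * (1 / 2) :=
        mul_le_mul_of_nonneg_left hhalf hMε0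
      linarith [h3, show (M + ε) * (a ^ 2 * (t₀ ^ (-γ) / γ))
        = a ^ 2 * (M + ε) * (t₀ ^ (-γ) / γ) from by ring]
    rw [hMdef] at hYt₁ hest h2
    linarith
  have hYM : ∀ v, t₀ ≤ v → Y v ≤ M := by
    intro v hv
    refine le_of_forall_pos_le_add fun ε hε => (key ε hε v hv).le
  -- conclusion
  intro t ht
  constructor
  · have h1 := hYM t ht
    rw [hMdef] at h1
    have h2 : Y t = y t * Real.exp (b * (hfun γ t - hfun γ t₀)) := by
      rw [hYdef, hEdef]
    rw [h2] at h1
    exact h1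
  · have h1 := hZbd M hM0 t ht (fun σ hσ => hYM σ hσ.1)
    have h2 : Z t = z t * Real.exp (b * (hfun γ t - hfun γ t₀)) := by
      rw [hZdef, hEdef]
    rw [h2, hMdef] at h1
    refine le_trans h1 (le_of_eq ?_)
    ring


end auxstmt19

theorem stmt_19 (γ a b t₀ : ℝ) (hγ : 0 < γ) (hγ1 : γ ≤ 1)
    (ha : 0 < a) (hb : 0 < b) (ht₀ : 1 < t₀)
    (y z y' z' : ℝ → ℝ)
    (hypos : ∀ t ∈ Set.Ici (1:ℝ), 0 ≤ y t) (hzpos : ∀ t ∈ Set.Ici (1:ℝ), 0 ≤ z t)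
    (hyd : ∀ t ∈ Set.Ici (1:ℝ), HasDerivAt y (y' t) t)
    (hzd : ∀ t ∈ Set.Ici (1:ℝ), HasDerivAt z (z' t) t)
    (hy'c : ContinuousOn y' (Set.Ici (1:ℝ))) (hz'c : ContinuousOn z' (Set.Ici (1:ℝ)))
    (hy' : ∀ t ∈ Set.Ici (1:ℝ), |y' t| ≤ t ^ (-2 : ℝ) * h0 γ t * b * y t + t ^ (-2 : ℝ) * a * z t)
    (hz' : ∀ t ∈ Set.Ici (1:ℝ), |z' t| ≤ t ^ (-2 : ℝ) * h0 γ t * b * z t + t ^ (-γ) * a * y t)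
    (hsize : 2 * a ^ 2 ≤ γ * t₀ ^ γ) :
    ∀ t, t₀ ≤ t →
      y t * Real.exp (-(b * |hfun γ t - hfun γ t₀|)) ≤ 2 * (y t₀ + a * z t₀ * t₀⁻¹) ∧
      z t * Real.exp (-(b * |hfun γ t - hfun γ t₀|))
        ≤ z t₀ + 2 * a * (y t₀ + a * z t₀ * t₀⁻¹) * h0 γ t := by
  intro t ht
  have hmono := hfun_mono hγ ht₀ ht
  have habs : -(b * |hfun γ t - hfun γ t₀|) = b * (hfun γ t - hfun γ t₀) := by
    rw [abs_of_nonpos (by linarith)]; ring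
  have h := core γ a b t₀ hγ hγ1 ha hb ht₀ y z y' z' hypos hzpos hyd hzd hy'c hz'c
    hy' hz' hsize t ht
  rw [habs]
  refine ⟨h.1, le_trans h.2 ?_⟩
  have h1 : 0 ≤ h0 γ t₀ := h0_nonneg γ ht₀.le
  have hy0 := hypos t₀ (Set.mem_Ici.mpr ht₀.le)
  have hz0 := hzpos t₀ (Set.mem_Ici.mpr ht₀.le)
  have ht₀inv : (0:ℝ) ≤ t₀⁻¹ := inv_nonneg.mpr (lt_trans one_pos ht₀).le
  have hco : 0 ≤ 2 * a * (y t₀ + a * z t₀ * t₀⁻¹) := by positivity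
  nlinarith [mul_nonneg hco h1]
end
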